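/- Let (Ω, 𝓕, P) be a probability space and N a convex set of probability measures on (Ω,𝓕), each absolutely continuous with respect to P, such that N ∩ ℙ ≠ ∅. If f is a random variable with f ∈ L¹(Q) for every Q ∈ N, then sup{E_Q[f] : Q ∈ N} = sup{E_Q[f] : Q ∈ N ∩ ℙ} (equality in ℝ ∪ {+∞}). -/

import Mathlib

open MeasureTheory

/-- Remark 2 of Biagini–Frittelli, integrable case: if `N` is a convex set of probability
measures absolutely continuous w.r.t. `P` containing at least one measure equivalent to
`P`, and `f ∈ L¹(Q)` for every `Q ∈ N`, then
`sup {E_Q[f] : Q ∈ N} = sup {E_Q[f] : Q ∈ N ∩ ℙ}` in `ℝ ∪ {+∞}`. -/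
theorem sup_integral_eq_sup_over_equivalent
    {Ω : Type*} [MeasurableSpace Ω] (P : Measure Ω) [IsProbabilityMeasure P]
    (N : Set (Measure Ω))
    (hprob : ∀ Q ∈ N, IsProbabilityMeasure Q)
    (habs : ∀ Q ∈ N, Q ≪ P)
    (hconv : ∀ Q ∈ N, ∀ R ∈ N, ∀ t : ℝ, 0 ≤ t → t ≤ 1 →
      ENNReal.ofReal t • Q + ENNReal.ofReal (1 - t) • R ∈ N)
    (hNP : ∃ Q ∈ N, P ≪ Q)
    (f : Ω → ℝ) (hf : ∀ Q ∈ N, Integrable f Q) :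
    sSup ((fun Q : Measure Ω => ((∫ x, f x ∂Q : ℝ) : EReal)) '' N) =
      sSup ((fun Q : Measure Ω => ((∫ x, f x ∂Q : ℝ) : EReal)) '' {Q ∈ N | P ≪ Q}) := by
  obtain ⟨R, hRN, hPR⟩ := hNP
  apply le_antisymm
  · apply sSup_le
    rintro _ ⟨Q, hQN, rfl⟩
    set a := ∫ x, f x ∂Q with ha
    set b := ∫ x, f x ∂(R) with hb
    -- for each n, the mixture with t = 1 - 1/(n+1) lies in the equivalent subclass
    have key : ∀ n : ℕ,
        (((1 - 1/(n+1:ℝ)) * a + (1/(n+1:ℝ)) * b : ℝ) : EReal) ≤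
          sSup ((fun Q : Measure Ω => ((∫ x, f x ∂Q : ℝ) : EReal)) '' {Q ∈ N | P ≪ Q}) := by
      intro n
      set t : ℝ := 1 - 1/(n+1:ℝ) with htdef
      have hn : (0:ℝ) < 1/(n+1:ℝ) := by positivity
      have hn1 : (1:ℝ)/(n+1:ℝ) ≤ 1 := by
        rw [div_le_one (by positivity)]; linarith [Nat.cast_nonneg (α := ℝ) n]
      have ht0 : 0 ≤ t := by rw [htdef]; linarith
      have ht1 : t ≤ 1 := by rw [htdef]; linarith
      have h1t : 1 - t = 1/(n+1:ℝ) := by rw [htdef]; ring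
      set Qn : Measure Ω := ENNReal.ofReal t • Q + ENNReal.ofReal (1 - t) • R with hQn
      have hQnN : Qn ∈ N := hconv Q hQN R hRN t ht0 ht1
      have hPQn : P ≪ Qn := by
        refine hPR.trans ?_
        intro s hs
        have := hs
        rw [hQn] at this
        simp only [Measure.add_apply, Measure.smul_apply, smul_eq_mul] at this
        have h2 : ENNReal.ofReal (1 - t) * R s = 0 := by
          have := add_eq_zero.mp this
          exact this.2
        have hne : ENNReal.ofReal (1 - t) ≠ 0 := by
          simp only [ne_eq, h1t, ENNReal.ofReal_eq_zero, not_le]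
          exact hn
        exact (mul_eq_zero.mp h2).resolve_left hne
      have hint : ∫ x, f x ∂Qn = t * a + (1 - t) * b := by
        rw [hQn, integral_add_measure
            (((hf Q hQN).smul_measure (by simp)))
            (((hf R hRN).smul_measure (by simp))),
          integral_smul_measure, integral_smul_measure,
          ENNReal.toReal_ofReal ht0, ENNReal.toReal_ofReal (by linarith),
          smul_eq_mul, smul_eq_mul]
      have hmem : (((t * a + (1 - t) * b : ℝ)) : EReal) ∈
          ((fun Q : Measure Ω => ((∫ x, f x ∂Q : ℝ) : EReal)) '' {Q ∈ N | P ≪ Q}) :=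
        ⟨Qn, ⟨hQnN, hPQn⟩, by simp only [hint]⟩
      have := le_sSup hmem
      rwa [h1t] at this
    -- pass to the limit n → ∞
    have htend : Filter.Tendsto
        (fun n : ℕ => (((1 - 1/(n+1:ℝ)) * a + (1/(n+1:ℝ)) * b : ℝ) : EReal))
        Filter.atTop (nhds (a : EReal)) := by
      rw [EReal.tendsto_coe]
      have h0 : Filter.Tendsto (fun n : ℕ => 1/(n+1:ℝ)) Filter.atTop (nhds 0) :=
        tendsto_one_div_add_atTop_nhds_zero_nat
      have : Filter.Tendsto (fun n : ℕ => (1 - 1/(n+1:ℝ)) * a + (1/(n+1:ℝ)) * b)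
          Filter.atTop (nhds ((1 - 0) * a + 0 * b)) := by
        exact (((tendsto_const_nhds.sub h0).mul tendsto_const_nhds).add
          (h0.mul tendsto_const_nhds))
      simpa using this
    exact le_of_tendsto htend (Filter.Eventually.of_forall key)
  · exact sSup_le_sSup (Set.image_mono fun Q h => h.1)
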